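/- Let D be a closed piecewise linear cycle in the plane whose turning number d satisfies d ≥ 1. Then the number of right turns of D is at least 2d + 1. -/

import Mathlib

open Complex Real Finset

/-- A closed piecewise linear cycle in the plane `ℝ² ≅ ℂ`, given by its cyclically
indexed list of vertices.  Consecutive vertices are distinct and the path never
reverses direction (exterior angle `≠ π`). -/
structure PLCycle where
  n : ℕ
  three_le : 3 ≤ n
  v : ZMod n → ℂ
  consecutive_ne : ∀ i : ZMod n, v (i + 1) ≠ v i
  no_reversal : ∀ i : ZMod n,
    Complex.arg ((v (i + 2) - v (i + 1)) / (v (i + 1) - v i)) ≠ Real.pi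

namespace PLCycle

instance instNeZero (C : PLCycle) : NeZero C.n := ⟨by have := C.three_le; omega⟩

/-- The signed exterior angle of the cycle at the vertex `v (i+1)`
(negative at right turns, positive at left turns). -/
noncomputable def turn (C : PLCycle) (i : ZMod C.n) : ℝ :=
  Complex.arg ((C.v (i + 2) - C.v (i + 1)) / (C.v (i + 1) - C.v i))

/-- The turning number, normalized so that a convex polygon traversed clockwise
(all right turns) has turning number `1`. -/
noncomputable def turningNumber (C : PLCycle) : ℝ :=
  -(∑ i : ZMod C.n, C.turn i) / (2 * Real.pi)

/-- `i` indexes a right turn. -/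
def IsRightTurn (C : PLCycle) (i : ZMod C.n) : Prop := C.turn i < 0

/-- `i` indexes a left turn. -/
def IsLeftTurn (C : PLCycle) (i : ZMod C.n) : Prop := 0 < C.turn i

/-- The number of right turns of the cycle. -/
noncomputable def rightTurns (C : PLCycle) : ℕ :=
  letI := Classical.decPred (C.IsRightTurn)
  (Finset.univ.filter C.IsRightTurn).card

/-- The sum of the oriented (interior) angles at the right turns of the cycle. -/
noncomputable def Ro (C : PLCycle) : ℝ :=
  letI := Classical.decPred (C.IsRightTurn)
  ∑ i ∈ Finset.univ.filter C.IsRightTurn, (Real.pi + C.turn i)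

/-- The sum of the oriented (interior) angles at the left turns of the cycle. -/
noncomputable def Lo (C : PLCycle) : ℝ :=
  letI := Classical.decPred (C.IsLeftTurn)
  ∑ i ∈ Finset.univ.filter C.IsLeftTurn, (Real.pi - C.turn i)

/-- The point `p` lies on (the image of) the cycle. -/
def onCycle (C : PLCycle) (p : ℂ) : Prop :=
  ∃ i : ZMod C.n, p ∈ segment ℝ (C.v i) (C.v (i + 1))

/-- The winding number of the cycle around a point `p` not on the cycle. -/
noncomputable def winding (C : PLCycle) (p : ℂ) : ℝ :=
  (∑ i : ZMod C.n, Complex.arg ((C.v (i + 1) - p) / (C.v i - p))) / (2 * Real.pi)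

end PLCycle

/-- A closed piecewise linear cycle in the plane whose turning number
`d` satisfies `d ≥ 1` has at least `2d + 1` right turns. -/
theorem stmt_0 (D : PLCycle) (d : ℤ) (hd : 1 ≤ d)
    (htn : D.turningNumber = d) :
    2 * d + 1 ≤ (D.rightTurns : ℤ) := by
  classical
  have hpi := Real.pi_pos
  -- sum of turns equals -2πd
  have hsum : ∑ i : ZMod D.n, -D.turn i = 2 * Real.pi * d := by
    have h := htn
    unfold PLCycle.turningNumber at h
    rw [div_eq_iff (by positivity : (2 * Real.pi) ≠ 0)] at h
    rw [Finset.sum_neg_distrib]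
    linarith
  have hlt : ∀ i : ZMod D.n, -D.turn i < Real.pi := by
    intro i
    have := Complex.neg_pi_lt_arg ((D.v (i + 2) - D.v (i + 1)) / (D.v (i + 1) - D.v i))
    unfold PLCycle.turn
    linarith
  set s := Finset.univ.filter D.IsRightTurn with hs
  have hsplit := Finset.sum_filter_add_sum_filter_not Finset.univ D.IsRightTurn
    (fun i => -D.turn i)
  have hnonright : ∑ i ∈ Finset.univ.filter (fun i => ¬ D.IsRightTurn i), -D.turn i ≤ 0 := by
    apply Finset.sum_nonpos
    intro i hi
    simp only [Finset.mem_filter, PLCycle.IsRightTurn, not_lt] at hi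
    linarith [hi.2]
  have hrbound : (2 : ℝ) * Real.pi * d < s.card * Real.pi := by
    rcases s.eq_empty_or_nonempty with he | hne
    · exfalso
      have : ∑ i ∈ s, -D.turn i = 0 := by rw [he]; simp
      have hd' : (1 : ℝ) ≤ d := by exact_mod_cast hd
      nlinarith [hsplit, hsum]
    · have : ∑ i ∈ s, -D.turn i < ∑ _i ∈ s, Real.pi :=
        Finset.sum_lt_sum_of_nonempty hne (fun i _ => hlt i)
      rw [Finset.sum_const, nsmul_eq_mul] at this
      nlinarith [hsplit, hsum]
  have hcard : (2 : ℝ) * d < s.card := by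
    have := (mul_lt_mul_iff_of_pos_right hpi).mp (by linarith : 2 * (d : ℝ) * Real.pi < s.card * Real.pi)
    linarith
  have : (2 : ℤ) * d < s.card := by exact_mod_cast hcard
  have hr : D.rightTurns = s.card := by
    unfold PLCycle.rightTurns
    congr 1
  rw [hr]
  omega
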